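/- Let (S, I₁, I₂, I₁₂, R) be a solution of the coinfection model with all components nonnegative, N(0) > 0, and death rates satisfying μ₀ < μ₄' and μ₀ < μⱼ' for j = 1,2,3. Then for all t ≥ 0, the total population N = S+I₁+I₂+I₁₂+R satisfies N(t) ≤ 1 / ( (1/S**)(1 − e^{−(b−μ₀)t}) + (1/N(0)) e^{−(b−μ₀)t} ). In particular N(t) ≤ max{S**, N(0)} for all t ≥ 0, and limsup_{t→∞} N(t) ≤ S**. -/

import Mathlib

open Filter Topology

lemma mono_from_zero (f : ℝ → ℝ)
    (hf : ∀ t ≥ (0:ℝ), ∃ d, HasDerivAt f d t ∧ 0 ≤ d) :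
    ∀ t ≥ (0:ℝ), f 0 ≤ f t := by
  have hmono : MonotoneOn f (Set.Ici (0:ℝ)) := by
    apply monotoneOn_of_deriv_nonneg (convex_Ici 0)
    · intro t ht
      obtain ⟨d, hd, _⟩ := hf t ht
      exact hd.continuousAt.continuousWithinAt
    · intro t ht
      rw [interior_Ici] at ht
      obtain ⟨d, hd, _⟩ := hf t ht.le
      exact hd.differentiableAt.differentiableWithinAt
    · intro t ht
      rw [interior_Ici] at ht
      obtain ⟨d, hd, hd0⟩ := hf t ht.le
      rw [hd.deriv]; exact hd0
  exact fun t ht => hmono (Set.mem_Ici.2 le_rfl) ht ht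

lemma cont_comp_max (f : ℝ → ℝ) (hf : ∀ t ≥ (0:ℝ), ContinuousAt f t) :
    Continuous (fun t => f (max t 0)) :=
  continuous_iff_continuousAt.2 fun t =>
    ContinuousAt.comp (hf (max t 0) (le_max_right t 0))
      ((continuous_id.max continuous_const).continuousAt)

lemma pos_of_deriv_ge (x c : ℝ → ℝ) (hc : Continuous c)
    (hx : ∀ t ≥ (0:ℝ), ∃ d, HasDerivAt x d t ∧ c t * x t ≤ d)
    (hx0 : 0 < x 0) : ∀ t ≥ (0:ℝ), 0 < x t := by
  set C : ℝ → ℝ := fun t => ∫ s in (0:ℝ)..t, c s with hCdef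
  have hC : ∀ t, HasDerivAt C (c t) t := fun t =>
    (hc.integral_hasStrictDerivAt 0 t).hasDerivAt
  have key : ∀ t ≥ (0:ℝ), x 0 * Real.exp (-C 0) ≤ x t * Real.exp (-C t) := by
    apply mono_from_zero (fun t => x t * Real.exp (-C t))
    intro t ht
    obtain ⟨d, hd, hcd⟩ := hx t ht
    refine ⟨_, hd.mul (((hC t).neg).exp), ?_⟩
    have he := Real.exp_pos (-C t)
    simp only [Pi.neg_apply]
    nlinarith
  intro t ht
  have h0 : C 0 = 0 := intervalIntegral.integral_same
  have h := key t ht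
  rw [h0, neg_zero, Real.exp_zero, mul_one] at h
  have he := Real.exp_pos (-C t)
  by_contra hcon
  push_neg at hcon
  nlinarith

set_option maxHeartbeats 2000000 in
theorem stmt_1
    (b K α1 α2 α3 β1 β2 γ1 γ2 η1 η2 ρ1 ρ2 ρ3 μ0 μ1' μ2' μ3' μ4' : ℝ)
    (hb : 0 < b) (hK : 0 < K) (hα1 : 0 < α1) (hα2 : 0 < α2) (hα3 : 0 < α3)
    (hβ1 : 0 < β1) (hβ2 : 0 < β2) (hγ1 : 0 < γ1) (hγ2 : 0 < γ2)
    (hη1 : 0 < η1) (hη2 : 0 < η2) (hρ1 : 0 < ρ1) (hρ2 : 0 < ρ2) (hρ3 : 0 < ρ3)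
    (hμ0 : 0 < μ0) (hμ1' : 0 < μ1') (hμ2' : 0 < μ2') (hμ3' : 0 < μ3') (hμ4' : 0 < μ4')
    (hbμ0 : μ0 < b)
    (hμ04 : μ0 < μ4') (hμ01 : μ0 < μ1') (hμ02 : μ0 < μ2') (hμ03 : μ0 < μ3')
    (μ1 μ2 μ3 : ℝ) (hμ1 : μ1 = ρ1 + μ1') (hμ2 : μ2 = ρ2 + μ2') (hμ3 : μ3 = ρ3 + μ3')
    (S I1 I2 I12 R N : ℝ → ℝ)
    (hN : ∀ t, N t = S t + I1 t + I2 t + I12 t + R t)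
    (hS : ∀ t ≥ (0:ℝ), HasDerivAt S
      ((b * (1 - N t / K) - α1 * I1 t - α2 * I2 t - (β1 + β2 + α3) * I12 t - μ0) * S t) t)
    (hI1 : ∀ t ≥ (0:ℝ), HasDerivAt I1
      ((b * (1 - N t / K) + α1 * S t - η1 * I12 t - γ1 * I2 t - μ1) * I1 t
        + β1 * S t * I12 t) t)
    (hI2 : ∀ t ≥ (0:ℝ), HasDerivAt I2
      ((b * (1 - N t / K) + α2 * S t - η2 * I12 t - γ2 * I1 t - μ2) * I2 t
        + β2 * S t * I12 t) t)
    (hI12 : ∀ t ≥ (0:ℝ), HasDerivAt I12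
      ((b * (1 - N t / K) + α3 * S t + η1 * I1 t + η2 * I2 t - μ3) * I12 t
        + (γ1 + γ2) * I1 t * I2 t) t)
    (hR : ∀ t ≥ (0:ℝ), HasDerivAt R
      ((b * (1 - N t / K) - μ4') * R t + ρ1 * I1 t + ρ2 * I2 t + ρ3 * I12 t) t)
    (hnonneg : ∀ t ≥ (0:ℝ), 0 ≤ S t ∧ 0 ≤ I1 t ∧ 0 ≤ I2 t ∧ 0 ≤ I12 t ∧ 0 ≤ R t)
    (hN0 : 0 < N 0)
    (Sss : ℝ) (hSss : Sss = K * (b - μ0) / b) :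
    (∀ t ≥ (0:ℝ), N t ≤ 1 / ((1 / Sss) * (1 - Real.exp (-(b - μ0) * t))
        + (1 / N 0) * Real.exp (-(b - μ0) * t)))
    ∧ (∀ t ≥ (0:ℝ), N t ≤ max Sss (N 0))
    ∧ limsup N atTop ≤ Sss := by
  have hr : (0:ℝ) < b - μ0 := by linarith
  have hSsspos : 0 < Sss := by rw [hSss]; positivity
  -- continuity of components at nonneg points, composed with max
  have cS : Continuous fun t => S (max t 0) :=
    cont_comp_max S (fun t ht => (hS t ht).continuousAt)
  have cI1 : Continuous fun t => I1 (max t 0) :=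
    cont_comp_max I1 (fun t ht => (hI1 t ht).continuousAt)
  have cI2 : Continuous fun t => I2 (max t 0) :=
    cont_comp_max I2 (fun t ht => (hI2 t ht).continuousAt)
  have cI12 : Continuous fun t => I12 (max t 0) :=
    cont_comp_max I12 (fun t ht => (hI12 t ht).continuousAt)
  have cR : Continuous fun t => R (max t 0) :=
    cont_comp_max R (fun t ht => (hR t ht).continuousAt)
  have cN : Continuous fun t => N (max t 0) := by
    have : (fun t => N (max t 0))
        = fun t => S (max t 0) + I1 (max t 0) + I2 (max t 0) + I12 (max t 0) + R (max t 0) :=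
      funext fun t => hN _
    rw [this]; exact (((cS.add cI1).add cI2).add cI12).add cR
  have cb : Continuous fun t => b * (1 - N (max t 0) / K) :=
    continuous_const.mul (continuous_const.sub (cN.div_const K))
  -- positivity of N on [0, ∞)
  have hNpos : ∀ t ≥ (0:ℝ), 0 < N t := by
    have h5 := hnonneg 0 le_rfl
    have hcase : 0 < S 0 ∨ 0 < I1 0 ∨ 0 < I2 0 ∨ 0 < I12 0 ∨ 0 < R 0 := by
      by_contra hcon
      push_neg at hcon
      have := hN 0
      obtain ⟨a1, a2, a3, a4, a5⟩ := h5
      obtain ⟨b1, b2, b3, b4, b5⟩ := hcon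
      linarith
    rcases hcase with h | h | h | h | h
    · have hp : ∀ t ≥ (0:ℝ), 0 < S t := by
        apply pos_of_deriv_ge S
          (fun t => b * (1 - N (max t 0) / K) - α1 * I1 (max t 0) - α2 * I2 (max t 0)
            - (β1 + β2 + α3) * I12 (max t 0) - μ0)
        · exact (((cb.sub (continuous_const.mul cI1)).sub
            (continuous_const.mul cI2)).sub (continuous_const.mul cI12)).sub continuous_const
        · intro t ht
          refine ⟨_, hS t ht, ?_⟩
          rw [max_eq_left ht]
        · exact h
      intro t ht
      obtain ⟨a1, a2, a3, a4, a5⟩ := hnonneg t ht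
      have := hp t ht
      rw [hN t]; linarith
    · have hp : ∀ t ≥ (0:ℝ), 0 < I1 t := by
        apply pos_of_deriv_ge I1
          (fun t => b * (1 - N (max t 0) / K) + α1 * S (max t 0) - η1 * I12 (max t 0)
            - γ1 * I2 (max t 0) - μ1)
        · exact (((cb.add (continuous_const.mul cS)).sub
            (continuous_const.mul cI12)).sub (continuous_const.mul cI2)).sub continuous_const
        · intro t ht
          refine ⟨_, hI1 t ht, ?_⟩
          rw [max_eq_left ht]
          obtain ⟨a1, a2, a3, a4, a5⟩ := hnonneg t ht
          exact le_add_of_nonneg_right (mul_nonneg (mul_nonneg hβ1.le a1) a4)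
        · exact h
      intro t ht
      obtain ⟨a1, a2, a3, a4, a5⟩ := hnonneg t ht
      have := hp t ht
      rw [hN t]; linarith
    · have hp : ∀ t ≥ (0:ℝ), 0 < I2 t := by
        apply pos_of_deriv_ge I2
          (fun t => b * (1 - N (max t 0) / K) + α2 * S (max t 0) - η2 * I12 (max t 0)
            - γ2 * I1 (max t 0) - μ2)
        · exact (((cb.add (continuous_const.mul cS)).sub
            (continuous_const.mul cI12)).sub (continuous_const.mul cI1)).sub continuous_const
        · intro t ht
          refine ⟨_, hI2 t ht, ?_⟩
          rw [max_eq_left ht]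
          obtain ⟨a1, a2, a3, a4, a5⟩ := hnonneg t ht
          exact le_add_of_nonneg_right (mul_nonneg (mul_nonneg hβ2.le a1) a4)
        · exact h
      intro t ht
      obtain ⟨a1, a2, a3, a4, a5⟩ := hnonneg t ht
      have := hp t ht
      rw [hN t]; linarith
    · have hp : ∀ t ≥ (0:ℝ), 0 < I12 t := by
        apply pos_of_deriv_ge I12
          (fun t => b * (1 - N (max t 0) / K) + α3 * S (max t 0) + η1 * I1 (max t 0)
            + η2 * I2 (max t 0) - μ3)
        · exact (((cb.add (continuous_const.mul cS)).add
            (continuous_const.mul cI1)).add (continuous_const.mul cI2)).sub continuous_const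
        · intro t ht
          refine ⟨_, hI12 t ht, ?_⟩
          rw [max_eq_left ht]
          obtain ⟨a1, a2, a3, a4, a5⟩ := hnonneg t ht
          exact le_add_of_nonneg_right
            (mul_nonneg (mul_nonneg (by positivity) a2) a3)
        · exact h
      intro t ht
      obtain ⟨a1, a2, a3, a4, a5⟩ := hnonneg t ht
      have := hp t ht
      rw [hN t]; linarith
    · have hp : ∀ t ≥ (0:ℝ), 0 < R t := by
        apply pos_of_deriv_ge R (fun t => b * (1 - N (max t 0) / K) - μ4')
        · exact cb.sub continuous_const
        · intro t ht
          refine ⟨_, hR t ht, ?_⟩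
          rw [max_eq_left ht]
          obtain ⟨a1, a2, a3, a4, a5⟩ := hnonneg t ht
          have h1 : 0 ≤ ρ1 * I1 t := mul_nonneg hρ1.le a2
          have h2 : 0 ≤ ρ2 * I2 t := mul_nonneg hρ2.le a3
          have h3 : 0 ≤ ρ3 * I12 t := mul_nonneg hρ3.le a4
          linarith
        · exact h
      intro t ht
      obtain ⟨a1, a2, a3, a4, a5⟩ := hnonneg t ht
      have := hp t ht
      rw [hN t]; linarith
  -- derivative of N
  have hN' : ∀ t ≥ (0:ℝ), HasDerivAt N
      (b * (1 - N t / K) * N t - μ0 * S t - μ1' * I1 t - μ2' * I2 t - μ3' * I12 t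
        - μ4' * R t) t := by
    intro t ht
    have h := ((((hS t ht).add (hI1 t ht)).add (hI2 t ht)).add (hI12 t ht)).add (hR t ht)
    have hfun : N = S + I1 + I2 + I12 + R := funext hN
    rw [← hfun] at h
    have hval : b * (1 - N t / K) * N t - μ0 * S t - μ1' * I1 t - μ2' * I2 t - μ3' * I12 t
        - μ4' * R t
        = (b * (1 - N t / K) - α1 * I1 t - α2 * I2 t - (β1 + β2 + α3) * I12 t - μ0) * S t
          + ((b * (1 - N t / K) + α1 * S t - η1 * I12 t - γ1 * I2 t - μ1) * I1 t
            + β1 * S t * I12 t)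
          + ((b * (1 - N t / K) + α2 * S t - η2 * I12 t - γ2 * I1 t - μ2) * I2 t
            + β2 * S t * I12 t)
          + ((b * (1 - N t / K) + α3 * S t + η1 * I1 t + η2 * I2 t - μ3) * I12 t
            + (γ1 + γ2) * I1 t * I2 t)
          + ((b * (1 - N t / K) - μ4') * R t + ρ1 * I1 t + ρ2 * I2 t + ρ3 * I12 t) := by
      rw [hμ1, hμ2, hμ3]
      nth_rewrite 2 [hN t]
      ring
    rw [hval]
    exact h
  -- u = 1/N satisfies the comparison via monotone auxiliary function
  have key : ∀ t ≥ (0:ℝ),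
      Real.exp ((b - μ0) * 0) * (N 0)⁻¹ - 1 / Sss * Real.exp ((b - μ0) * 0)
        ≤ Real.exp ((b - μ0) * t) * (N t)⁻¹ - 1 / Sss * Real.exp ((b - μ0) * t) := by
    apply mono_from_zero
      (fun t => Real.exp ((b - μ0) * t) * (N t)⁻¹ - 1 / Sss * Real.exp ((b - μ0) * t))
    intro t ht
    have hNt := hNpos t ht
    have hNne : N t ≠ 0 := ne_of_gt hNt
    have he : HasDerivAt (fun s : ℝ => Real.exp ((b - μ0) * s))
        (Real.exp ((b - μ0) * t) * (b - μ0)) t := by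
      simpa using ((hasDerivAt_id t).const_mul (b - μ0)).exp
    have hu : HasDerivAt (fun s => (N s)⁻¹)
        (-(b * (1 - N t / K) * N t - μ0 * S t - μ1' * I1 t - μ2' * I2 t - μ3' * I12 t
          - μ4' * R t) / N t ^ 2) t := (hN' t ht).inv hNne
    refine ⟨_, (he.mul hu).sub (he.const_mul (1 / Sss)), ?_⟩
    -- show the derivative value is nonnegative
    obtain ⟨a1, a2, a3, a4, a5⟩ := hnonneg t ht
    have hboundN' : b * (1 - N t / K) * N t - μ0 * S t - μ1' * I1 t - μ2' * I2 t
        - μ3' * I12 t - μ4' * R t ≤ (b - μ0) * N t - b / K * N t ^ 2 := by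
      have hNeq := hN t
      have h1 : μ0 * S t + μ1' * I1 t + μ2' * I2 t + μ3' * I12 t + μ4' * R t
          ≥ μ0 * N t := by rw [hNeq]; nlinarith
      have h2 : b * (1 - N t / K) * N t = b * N t - b / K * N t ^ 2 := by
        field_simp
      linarith
    have hepos := Real.exp_pos ((b - μ0) * t)
    set E := Real.exp ((b - μ0) * t) with hE
    set D' := b * (1 - N t / K) * N t - μ0 * S t - μ1' * I1 t - μ2' * I2 t - μ3' * I12 t
      - μ4' * R t with hD'
    have hSsseq : 1 / Sss = (b / K) / (b - μ0) := by
      rw [hSss]; field_simp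
    have hrearr : E * (b - μ0) * (N t)⁻¹ + E * (-D' / N t ^ 2) - 1 / Sss * (E * (b - μ0))
        = E * (((b - μ0) * N t - b / K * N t ^ 2 - D') / N t ^ 2) := by
      rw [hSsseq]
      field_simp
      ring
    rw [hrearr]
    apply mul_nonneg hepos.le
    apply div_nonneg _ (by positivity)
    linarith
  -- the key inequality: D t ≤ (N t)⁻¹
  set e : ℝ → ℝ := fun t => Real.exp (-(b - μ0) * t) with he_def
  set D : ℝ → ℝ := fun t => (1 / Sss) * (1 - e t) + (1 / N 0) * e t with hD_def
  have hepos : ∀ t, 0 < e t := fun t => Real.exp_pos _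
  have hele1 : ∀ t ≥ (0:ℝ), e t ≤ 1 := by
    intro t ht
    have : -(b - μ0) * t ≤ 0 := by nlinarith
    calc e t ≤ Real.exp 0 := Real.exp_le_exp.2 this
      _ = 1 := Real.exp_zero
  have hDpos : ∀ t ≥ (0:ℝ), 0 < D t := by
    intro t ht
    have h1 : 0 < 1 / N 0 * e t := by positivity
    have h2 : 0 ≤ 1 / Sss * (1 - e t) := by
      apply mul_nonneg (by positivity)
      linarith [hele1 t ht]
    simp only [hD_def]
    linarith
  have hDle : ∀ t ≥ (0:ℝ), D t ≤ (N t)⁻¹ := by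
    intro t ht
    have h := key t ht
    rw [mul_zero, Real.exp_zero, one_mul, mul_one] at h
    have hEinv : e t = (Real.exp ((b - μ0) * t))⁻¹ := by
      rw [he_def]
      simp only
      rw [← Real.exp_neg]
      ring_nf
    have hEpos := Real.exp_pos ((b - μ0) * t)
    set E := Real.exp ((b - μ0) * t) with hE
    have hEne : E ≠ 0 := ne_of_gt hEpos
    have hN0inv : (N 0)⁻¹ = 1 / N 0 := (one_div _).symm
    have hNne : N t ≠ 0 := ne_of_gt (hNpos t ht)
    calc D t = (1 / Sss * (E - 1) + 1 / N 0) * E⁻¹ := by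
          simp only [hD_def, hEinv]
          field_simp
      _ ≤ (E * (N t)⁻¹) * E⁻¹ := by
          apply mul_le_mul_of_nonneg_right _ (by positivity)
          rw [hN0inv] at h
          linarith
      _ = (N t)⁻¹ := by field_simp
  -- part 1
  have part1 : ∀ t ≥ (0:ℝ), N t ≤ 1 / ((1 / Sss) * (1 - Real.exp (-(b - μ0) * t))
      + (1 / N 0) * Real.exp (-(b - μ0) * t)) := by
    intro t ht
    have h1 := hDle t ht
    have h2 := hDpos t ht
    have h3 := hNpos t ht
    have := one_div_le_one_div_of_le h2 h1
    rwa [one_div, inv_inv] at this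
  -- part 2
  have part2 : ∀ t ≥ (0:ℝ), N t ≤ max Sss (N 0) := by
    intro t ht
    have hM : 0 < max Sss (N 0) := lt_max_of_lt_left hSsspos
    have h1 : 1 / max Sss (N 0) ≤ D t := by
      have ha : 1 / max Sss (N 0) ≤ 1 / Sss :=
        one_div_le_one_div_of_le hSsspos (le_max_left _ _)
      have hb' : 1 / max Sss (N 0) ≤ 1 / N 0 :=
        one_div_le_one_div_of_le hN0 (le_max_right _ _)
      have h2 := hepos t
      have h3 := hele1 t ht
      simp only [hD_def]
      nlinarith
    calc N t ≤ 1 / D t := part1 t ht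
      _ ≤ 1 / (1 / max Sss (N 0)) := one_div_le_one_div_of_le (by positivity) h1
      _ = max Sss (N 0) := one_div_one_div _
  -- part 3
  have hetends : Tendsto e atTop (𝓝 0) := by
    have h1 : Tendsto (fun t : ℝ => (b - μ0) * t) atTop atTop :=
      Tendsto.const_mul_atTop hr tendsto_id
    have h2 := Real.tendsto_exp_neg_atTop_nhds_zero.comp h1
    apply h2.congr
    intro t
    simp only [Function.comp_apply, he_def, neg_mul]
  have hDlim : Tendsto D atTop (𝓝 (1 / Sss)) := by
    have h1 : Tendsto D atTop (𝓝 ((1 / Sss) * (1 - 0) + (1 / N 0) * 0)) :=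
      ((tendsto_const_nhds.sub hetends).const_mul _).add (hetends.const_mul _)
    simpa using h1
  have hlim : Tendsto (fun t => 1 / D t) atTop (𝓝 Sss) := by
    have h2 := hDlim.inv₀ (by positivity : (1:ℝ) / Sss ≠ 0)
    simpa [one_div, inv_inv] using h2
  refine ⟨part1, part2, ?_⟩
  have hub : N ≤ᶠ[atTop] fun t => 1 / D t := by
    rw [EventuallyLE, eventually_atTop]
    exact ⟨0, fun t ht => part1 t ht⟩
  have hcob : IsCoboundedUnder (· ≤ ·) atTop N := by
    apply isCoboundedUnder_le_of_eventually_le atTop (x := 0)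
    rw [eventually_atTop]
    refine ⟨0, fun t ht => ?_⟩
    obtain ⟨a1, a2, a3, a4, a5⟩ := hnonneg t ht
    rw [hN t]; linarith
  calc limsup N atTop ≤ limsup (fun t => 1 / D t) atTop :=
        limsup_le_limsup hub hcob hlim.isBoundedUnder_le
    _ = Sss := hlim.limsup_eq
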